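/- Let Z_1,…,Z_p be i.i.d. standard Gaussian random variables, μ ∈ R^p, Y = ∑_{i=1}^p (Z_i+μ_i)², λ = ‖μ‖², m = p + λ, and σ = √(2(p+2λ)). Then for all x > 0: Pr[Y ≥ m + σ√(2x) + 2x] ≤ exp(−x). -/

import Mathlib

open MeasureTheory ProbabilityTheory Real

lemma pointwise_key {t : ℝ} (ht : t < 1/2) (c : ℝ) (z : ℝ) :
    Real.exp (t * (z + c) ^ 2) * gaussianPDFReal 0 1 z
      = Real.exp (t * c ^ 2 / (1 - 2 * t)) * (Real.sqrt (1 - 2 * t))⁻¹ *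
        gaussianPDFReal (2 * t * c / (1 - 2 * t)) ⟨(1 - 2 * t)⁻¹, inv_nonneg.mpr (by linarith)⟩ z := by
  have hu : (0:ℝ) < 1 - 2 * t := by linarith
  simp only [gaussianPDFReal, NNReal.coe_mk, NNReal.coe_one]
  rw [mul_one]
  change _ = _ * ((Real.sqrt (2 * π * (1 - 2 * t)⁻¹))⁻¹ * Real.exp (-(z - 2 * t * c / (1 - 2 * t)) ^ 2 / (2 * (1 - 2 * t)⁻¹)))
  have hsq : Real.sqrt (2 * π * (1 - 2*t)⁻¹) = Real.sqrt (2 * π) / Real.sqrt (1 - 2*t) := by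
    rw [Real.sqrt_mul (by positivity), Real.sqrt_inv, div_eq_mul_inv]
  rw [hsq]
  have hπ : (0:ℝ) < Real.sqrt (2 * π) := by positivity
  have hs : (0:ℝ) < Real.sqrt (1 - 2*t) := Real.sqrt_pos.mpr hu
  have hdi : (Real.sqrt (2*π) / Real.sqrt (1-2*t))⁻¹ = Real.sqrt (1-2*t) * (Real.sqrt (2*π))⁻¹ := by
    rw [inv_div]; ring
  rw [hdi]
  have hexp : t * (z + c) ^ 2 + (-(z - 0) ^ 2 / (2 * 1))
      = t * c ^ 2 / (1 - 2 * t) + (-(z - 2 * t * c / (1 - 2 * t)) ^ 2 / (2 * (1 - 2 * t)⁻¹)) := by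
    generalize ha : 1 - 2 * t = a at *
    obtain rfl : t = (1 - a) / 2 := by linarith
    field_simp
    ring
  calc Real.exp (t * (z + c) ^ 2) * ((Real.sqrt (2*π))⁻¹ * Real.exp (-(z - 0) ^ 2 / (2 * 1)))
      = (Real.sqrt (2*π))⁻¹ * Real.exp (t * (z + c) ^ 2 + (-(z - 0) ^ 2 / (2 * 1))) := by
        rw [Real.exp_add]; ring
    _ = ((Real.sqrt (1-2*t))⁻¹ * Real.sqrt (1-2*t)) * ((Real.sqrt (2*π))⁻¹ *
          Real.exp (t * c ^ 2 / (1 - 2 * t) + (-(z - 2 * t * c / (1 - 2 * t)) ^ 2 / (2 * (1 - 2 * t)⁻¹)))) := by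
        rw [hexp, inv_mul_cancel₀ hs.ne', one_mul]
    _ = _ := by rw [Real.exp_add]; ring

lemma gaussianReal_withDensity :
    gaussianReal 0 1 = volume.withDensity
      (fun z => ((gaussianPDFReal 0 1 z).toNNReal : ENNReal)) := by
  rw [gaussianReal_of_var_ne_zero _ one_ne_zero]
  rfl

lemma integrable_exp_sq_gaussian {t : ℝ} (ht : t < 1/2) (c : ℝ) :
    Integrable (fun z => Real.exp (t * (z + c) ^ 2)) (gaussianReal 0 1) := by
  rw [gaussianReal_withDensity,
    integrable_withDensity_iff_integrable_smul (measurable_gaussianPDFReal 0 1).real_toNNReal]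
  have : (fun z => (gaussianPDFReal 0 1 z).toNNReal • Real.exp (t * (z + c) ^ 2))
      = fun z => Real.exp (t * c ^ 2 / (1 - 2 * t)) * (Real.sqrt (1 - 2 * t))⁻¹ *
        gaussianPDFReal (2 * t * c / (1 - 2 * t)) ⟨(1 - 2 * t)⁻¹, inv_nonneg.mpr (by linarith)⟩ z := by
    ext z
    rw [NNReal.smul_def, Real.coe_toNNReal _ (gaussianPDFReal_nonneg 0 1 z), smul_eq_mul,
      mul_comm, pointwise_key ht]
  rw [this]
  exact (integrable_gaussianPDFReal _ _).const_mul _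

lemma integral_exp_sq_gaussian {t : ℝ} (ht : t < 1/2) (c : ℝ) :
    ∫ z, Real.exp (t * (z + c) ^ 2) ∂(gaussianReal 0 1)
      = (Real.sqrt (1 - 2 * t))⁻¹ * Real.exp (t * c ^ 2 / (1 - 2 * t)) := by
  rw [gaussianReal_withDensity,
    integral_withDensity_eq_integral_smul (measurable_gaussianPDFReal 0 1).real_toNNReal]
  have : (fun z => (gaussianPDFReal 0 1 z).toNNReal • Real.exp (t * (z + c) ^ 2))
      = fun z => Real.exp (t * c ^ 2 / (1 - 2 * t)) * (Real.sqrt (1 - 2 * t))⁻¹ *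
        gaussianPDFReal (2 * t * c / (1 - 2 * t)) ⟨(1 - 2 * t)⁻¹, inv_nonneg.mpr (by linarith)⟩ z := by
    ext z
    rw [NNReal.smul_def, Real.coe_toNNReal _ (gaussianPDFReal_nonneg 0 1 z), smul_eq_mul,
      mul_comm, pointwise_key ht]
  rw [this, integral_const_mul]
  erw [integral_gaussianPDFReal_eq_one _ (by
    intro h
    have h2 := congrArg NNReal.toReal h
    change (1 - 2 * t)⁻¹ = 0 at h2
    have h3 : (0:ℝ) < (1 - 2 * t)⁻¹ := inv_pos.mpr (by linarith)
    linarith), mul_one, mul_comm]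

lemma sqrt_inv_le_exp_aux {t : ℝ} (ht0 : 0 ≤ t) (ht : t < 1/2) :
    (Real.sqrt (1 - 2 * t))⁻¹ ≤ Real.exp (t + t ^ 2 / (1 - 2 * t)) := by
  set u : ℝ := 1 - 2 * t with hu_def
  have hu : 0 < u := by simp only [hu_def]; linarith
  have hu1 : u ≤ 1 := by simp only [hu_def]; linarith
  have hlog : Real.log u ≤ 0 := Real.log_nonpos hu.le hu1
  have hsinh : -Real.log u ≤ Real.sinh (-Real.log u) := by
    rcases (neg_nonneg.mpr hlog).lt_or_eq with h | h
    · exact (Real.self_lt_sinh_iff.mpr h).le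
    · rw [← h]; simp
  have hsinh_eq : Real.sinh (-Real.log u) = (u⁻¹ - u) / 2 := by
    rw [Real.sinh_eq, neg_neg, Real.exp_log hu, Real.exp_neg, Real.exp_log hu]
  have hsqrt : Real.sqrt u = Real.exp (Real.log u / 2) := by
    rw [Real.sqrt_eq_rpow, Real.rpow_def_of_pos hu]
    ring_nf
  rw [hsqrt, ← Real.exp_neg, Real.exp_le_exp]
  have harith : t + t ^ 2 / u = (u⁻¹ - u) / 4 := by
    have : t = (1 - u) / 2 := by simp only [hu_def]; ring
    rw [this]
    field_simp
    ring
  rw [harith]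
  rw [hsinh_eq] at hsinh
  linarith

lemma exponent_eq {σ s pl lam : ℝ} (hσ : 0 < σ) (hs : 0 < s)
    (hσ2 : σ ^ 2 = 2 * (pl + 2 * lam)) :
    -(s / (σ + 2 * s)) * ((pl + lam) + σ * s + s ^ 2)
      + (pl * ((s / (σ + 2 * s)) + (s / (σ + 2 * s)) ^ 2 / (1 - 2 * (s / (σ + 2 * s))))
        + (s / (σ + 2 * s)) * lam / (1 - 2 * (s / (σ + 2 * s)))) = -(s ^ 2 / 2) := by
  have hden : σ + 2 * s ≠ 0 := by positivity
  have hu : 1 - 2 * (s / (σ + 2 * s)) = σ / (σ + 2 * s) := by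
    field_simp
    ring
  have hpl : pl = σ ^ 2 / 2 - 2 * lam := by linarith
  rw [hu, hpl]
  field_simp
  ring
/-- upper-tail half of Lemma A.4 of the paper, due to Birgé.
For the noncentral chi-squared variable `Y = ∑ (Z i + μ i)²` with `Z i` i.i.d. standard
Gaussians, `λ = ‖μ‖²`, `m = p + λ`, `σ = √(2 (p + 2 λ))`, and every `x > 0`:
`Pr[Y ≥ m + σ √(2x) + 2x] ≤ exp (−x)`. -/
theorem noncentral_chiSq_upper_tail_bound
    {Ω : Type*} [MeasurableSpace Ω] (P : Measure Ω) [IsProbabilityMeasure P]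
    {p : ℕ} (Z : Fin p → Ω → ℝ) (hZmeas : ∀ i, Measurable (Z i))
    (hZindep : iIndepFun Z P)
    (hZ : ∀ i, P.map (Z i) = gaussianReal 0 1)
    (μ : Fin p → ℝ) (lam m σ : ℝ)
    (hlam : lam = ∑ i, (μ i) ^ 2) (hm : m = p + lam)
    (hσ : σ = Real.sqrt (2 * (p + 2 * lam)))
    (x : ℝ) (hx : 0 < x) :
    (P {ω | m + σ * Real.sqrt (2 * x) + 2 * x ≤ ∑ i, (Z i ω + μ i) ^ 2}).toReal ≤
      Real.exp (-x) := by
  rcases Nat.eq_zero_or_pos p with hp | hp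
  · subst hp
    have hlam0 : lam = 0 := by simp [hlam]
    have hσ0 : σ = 0 := by rw [hσ, hlam0]; simp
    have hset : {ω : Ω | m + σ * Real.sqrt (2 * x) + 2 * x ≤ ∑ i : Fin 0, (Z i ω + μ i) ^ 2}
        = ∅ := by
      ext ω
      simp only [Set.mem_setOf_eq, Set.mem_empty_iff_false, iff_false, not_le,
        Finset.univ_eq_empty, Finset.sum_empty]
      rw [hm, hσ0, hlam0]
      simp only [Nat.cast_zero, add_zero, zero_mul, zero_add]
      linarith
    rw [hset]
    simp only [measure_empty, ENNReal.toReal_zero]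
    exact (Real.exp_pos _).le
  · have hlam0 : (0:ℝ) ≤ lam := by
      rw [hlam]; exact Finset.sum_nonneg fun i _ => sq_nonneg _
    have hp1 : (1:ℝ) ≤ (p:ℝ) := by exact_mod_cast hp
    have hσpos : 0 < σ := by
      rw [hσ]; exact Real.sqrt_pos.mpr (by linarith)
    have hσ2 : σ ^ 2 = 2 * ((p:ℝ) + 2 * lam) := by
      rw [hσ, Real.sq_sqrt (by linarith)]
    set s : ℝ := Real.sqrt (2 * x) with hs_def
    have hs : 0 < s := Real.sqrt_pos.mpr (by linarith)
    have hs2 : s ^ 2 = 2 * x := Real.sq_sqrt (by linarith)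
    set t : ℝ := s / (σ + 2 * s) with ht_def
    have ht0 : 0 < t := div_pos hs (by linarith)
    have ht : t < 1 / 2 := by
      rw [ht_def, div_lt_iff₀ (by linarith)]; linarith
    set u : ℝ := 1 - 2 * t with hu_def
    have hupos : 0 < u := by rw [hu_def]; linarith
    set Y : Fin p → Ω → ℝ := fun i ω => (Z i ω + μ i) ^ 2 with hY
    have hYmeas : ∀ i, Measurable (Y i) := fun i => ((hZmeas i).add_const _).pow_const 2
    have hYindep : iIndepFun Y P :=
      hZindep.comp (fun i z => (z + μ i) ^ 2)
        (fun i => (measurable_id.add_const _).pow_const 2)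
    have hint : ∀ i, Integrable (fun ω => Real.exp (t * Y i ω)) P := by
      intro i
      have hmg : Integrable (fun z => Real.exp (t * (z + μ i) ^ 2)) (P.map (Z i)) := by
        rw [hZ i]; exact integrable_exp_sq_gaussian ht (μ i)
      rw [integrable_map_measure
        (by exact ((((measurable_id.add_const _).pow_const 2).const_mul t).exp).aestronglyMeasurable)
        (hZmeas i).aemeasurable] at hmg
      exact hmg
    have hmgf_i : ∀ i, mgf (Y i) P t
        = (Real.sqrt u)⁻¹ * Real.exp (t * (μ i) ^ 2 / u) := by
      intro i
      rw [mgf]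
      have heq : ∫ ω, Real.exp (t * Y i ω) ∂P
          = ∫ z, Real.exp (t * (z + μ i) ^ 2) ∂(P.map (Z i)) := by
        rw [integral_map (hZmeas i).aemeasurable
          (by exact ((((measurable_id.add_const _).pow_const 2).const_mul t).exp).aestronglyMeasurable)]
      rw [heq, hZ i, integral_exp_sq_gaussian ht]
    have hint_sum : Integrable (fun ω => Real.exp (t * (∑ i, Y i) ω)) P :=
      hYindep.integrable_exp_mul_sum hYmeas fun i _ => hint i
    have hset : {ω | m + σ * s + 2 * x ≤ ∑ i, (Z i ω + μ i) ^ 2}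
        = {ω | m + σ * s + 2 * x ≤ (∑ i, Y i) ω} := by
      ext ω; simp [Finset.sum_apply, Y]
    rw [hset]
    refine le_trans (measure_ge_le_exp_mul_mgf (m + σ * s + 2 * x) ht0.le hint_sum) ?_
    rw [hYindep.mgf_sum hYmeas Finset.univ]
    have hprod : ∏ i, mgf (Y i) P t
        = ((Real.sqrt u)⁻¹) ^ p * Real.exp (t * lam / u) := by
      rw [Finset.prod_congr rfl fun i _ => hmgf_i i, Finset.prod_mul_distrib,
        Finset.prod_const, Finset.card_univ, Fintype.card_fin, ← Real.exp_sum]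
      congr 1
      rw [hlam, Finset.mul_sum, Finset.sum_div]
    rw [hprod]
    have hpow : ((Real.sqrt u)⁻¹) ^ p ≤ Real.exp ((p:ℝ) * (t + t ^ 2 / u)) := by
      have h1 : ((Real.sqrt u)⁻¹) ^ p ≤ (Real.exp (t + t ^ 2 / u)) ^ p :=
        pow_le_pow_left₀ (inv_nonneg.mpr (Real.sqrt_nonneg _))
          (by rw [hu_def] at *; exact sqrt_inv_le_exp_aux ht0.le ht) p
      refine h1.trans_eq ?_
      rw [← Real.exp_nat_mul]
    have hE : -t * (m + σ * s + 2 * x) + ((p:ℝ) * (t + t ^ 2 / u) + t * lam / u) = -x := by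
      have h2 := exponent_eq (pl := (p:ℝ)) (lam := lam) hσpos hs hσ2
      rw [hm, show (2:ℝ) * x = s ^ 2 from hs2.symm, show -x = -(s ^ 2 / 2) by rw [hs2]; ring]
      exact h2
    calc Real.exp (-t * (m + σ * s + 2 * x)) * (((Real.sqrt u)⁻¹) ^ p * Real.exp (t * lam / u))
        ≤ Real.exp (-t * (m + σ * s + 2 * x)) *
          (Real.exp ((p:ℝ) * (t + t ^ 2 / u)) * Real.exp (t * lam / u)) := by
          gcongr
      _ = Real.exp (-t * (m + σ * s + 2 * x) + ((p:ℝ) * (t + t ^ 2 / u) + t * lam / u)) := by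
          rw [Real.exp_add, Real.exp_add]
      _ = Real.exp (-x) := by rw [hE]
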